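/- For the PMPC counterexample with N* ≥ 2: define closed-loop execution where at each time the controller replans with consensus horizon K and executes the first planned action. If K ≥ N* (measuring consensus from the current time), the closed-loop trajectory under either true disturbance w₁ or w₂ remains in state 0 forever. If instead the plan is allowed to tailor actions to each particle after only K < N* steps, then there exists a plan that is optimal for each particle individually whose first action is u^(0) = 1, and executing such first actions leads the closed-loop state to 2 under at least one true disturbance. -/

import Mathlib

open scoped ENNReal

/-- Dynamics of the PMPC counterexample: state in {0,1,2}, action and
disturbance in Bool (`false` = 0, `true` = 1); state 2 is absorbing. -/
def pmpcDyn (x : ℕ) (u w : Bool) : ℕ :=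
  if x = 0 then (if u then 1 else 0)
  else if x = 1 then (if u = w then 1 else 2)
  else 2

/-- Trajectory from initial state `x` under controls `u` and disturbances `w`. -/
def trajFrom (x : ℕ) (u w : ℕ → Bool) : ℕ → ℕ
  | 0 => x
  | j + 1 => pmpcDyn (trajFrom x u w j) (u j) (w j)

/-- Stage cost: c(0) = 1, c(1) = 0, c(2) = ∞. -/
noncomputable def pmpcCost (x : ℕ) : ℝ≥0∞ := if x = 0 then 1 else if x = 1 then 0 else ⊤

/-- Cost over planning horizon `N` of the open-loop plan `u` starting from state `x`
under disturbance sequence `w`. -/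
noncomputable def planCost (x : ℕ) (w u : ℕ → Bool) (N : ℕ) : ℝ≥0∞ :=
  ∑ j ∈ Finset.range (N + 1), pmpcCost (trajFrom x u w j)

/-- First disturbance realization: 0 before step `Nstar`, parity of `j` afterwards. -/
def w₁ (Nstar : ℕ) (j : ℕ) : Bool := if j < Nstar then false else decide (j % 2 = 1)

/-- Second disturbance realization: 0 before step `Nstar`, opposite parity afterwards. -/
def w₂ (Nstar : ℕ) (j : ℕ) : Bool := if j < Nstar then false else decide ((j + 1) % 2 = 1)

/-- Closed-loop trajectory from state 0 under a (time, state)-feedback policy `π`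
and true disturbance `w`. -/
def closedLoop (π : ℕ → ℕ → Bool) (w : ℕ → Bool) : ℕ → ℕ
  | 0 => 0
  | t + 1 => pmpcDyn (closedLoop π w t) (π t (closedLoop π w t)) (w t)


lemma traj_shift (x : ℕ) (u w : ℕ → Bool) (j : ℕ) :
    trajFrom x u w (j + 1)
      = trajFrom (pmpcDyn x (u 0) (w 0)) (fun i => u (i + 1)) (fun i => w (i + 1)) j := by
  induction j with
  | zero => rfl
  | succ j ih => rw [trajFrom, ih]; rfl

lemma stay_one (u w : ℕ → Bool) (j : ℕ) (h : ∀ i < j, u i = w i) :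
    trajFrom 1 u w j = 1 := by
  induction j with
  | zero => rfl
  | succ j ih =>
    have h1 : trajFrom 1 u w j = 1 := ih (fun i hi => h i (Nat.lt_succ_of_lt hi))
    simp [trajFrom, h1, pmpcDyn, h j (Nat.lt_succ_self j)]

lemma no_two (u w : ℕ → Bool) (j₀ : ℕ)
    (h : ∀ j ≤ j₀, trajFrom 1 u w j ≠ 2) : ∀ i < j₀, u i = w i := by
  intro i hi
  induction i using Nat.strong_induction_on with
  | _ i ih =>
    by_contra hne
    have h1 : trajFrom 1 u w i = 1 := stay_one u w i (fun k hk => ih k hk (lt_trans hk hi))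
    have h2 : trajFrom 1 u w (i + 1) = 2 := by
      simp [trajFrom, h1, pmpcDyn, hne]
    exact h (i + 1) hi h2

lemma planCost_eq_top (x : ℕ) (w u : ℕ → Bool) (N j : ℕ) (hj : j ≤ N)
    (h : trajFrom x u w j = 2) : planCost x w u N = ⊤ := by
  have hmem : j ∈ Finset.range (N + 1) := Finset.mem_range.mpr (Nat.lt_succ_of_le hj)
  have ht : pmpcCost (trajFrom x u w j) = ⊤ := by simp [h, pmpcCost]
  rw [planCost]
  refine top_le_iff.mp ?_
  calc (⊤ : ℝ≥0∞) = pmpcCost (trajFrom x u w j) := ht.symm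
    _ ≤ ∑ i ∈ Finset.range (N + 1), pmpcCost (trajFrom x u w i) :=
      Finset.single_le_sum (f := fun i => pmpcCost (trajFrom x u w i))
        (fun i _ => zero_le) hmem

lemma traj_zero (w : ℕ → Bool) (j : ℕ) : trajFrom 0 (fun _ => false) w j = 0 := by
  induction j with
  | zero => rfl
  | succ j ih => simp [trajFrom, ih, pmpcDyn]

lemma planCost_false (w : ℕ → Bool) (N : ℕ) :
    planCost 0 w (fun _ => false) N ≠ ⊤ := by
  rw [planCost, ENNReal.sum_ne_top]
  intro i _
  simp [traj_zero, pmpcCost]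

lemma w_ne (Nstar m : ℕ) (hm : Nstar ≤ m) : w₁ Nstar m ≠ w₂ Nstar m := by
  simp only [w₁, w₂, if_neg (Nat.not_lt.mpr hm), ne_eq, decide_eq_decide]
  omega

lemma one_le_planCost (w v : ℕ → Bool) (N : ℕ) : 1 ≤ planCost 0 w v N := by
  have hmem : 0 ∈ Finset.range (N + 1) := Finset.mem_range.mpr (Nat.succ_pos N)
  rw [planCost]
  calc (1 : ℝ≥0∞) = pmpcCost (trajFrom 0 v w 0) := by simp [trajFrom, pmpcCost]
    _ ≤ ∑ i ∈ Finset.range (N + 1), pmpcCost (trajFrom 0 v w i) :=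
      Finset.single_le_sum (f := fun i => pmpcCost (trajFrom 0 v w i))
        (fun i _ => zero_le) hmem

lemma track_traj (w : ℕ → Bool) (j : ℕ) :
    trajFrom 0 (fun j => if j = 0 then true else w j) w (j + 1) = 1 := by
  induction j with
  | zero => simp [trajFrom, pmpcDyn]
  | succ j ih =>
    show pmpcDyn (trajFrom 0 _ w (j + 1)) _ _ = 1
    rw [ih]
    simp [pmpcDyn]

lemma track_cost (w : ℕ → Bool) (N : ℕ) :
    planCost 0 w (fun j => if j = 0 then true else w j) N = 1 := by
  rw [planCost, Finset.sum_range_succ']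
  have : ∀ i ∈ Finset.range N,
      pmpcCost (trajFrom 0 (fun j => if j = 0 then true else w j) w (i + 1)) = 0 := by
    intro i _
    rw [track_traj]
    simp [pmpcCost]
  rw [Finset.sum_congr rfl this]
  simp [trajFrom, pmpcCost]

/-- Key lemma for part (a): the first action of a jointly optimal consensus plan
from state 0 must be `false`. -/
lemma first_false (Nstar K N t : ℕ) (hNstar : 2 ≤ Nstar) (hKN : K < N) (hK : Nstar ≤ K)
    (u₁ u₂ : ℕ → Bool) (hcons : ∀ j ≤ K, u₁ j = u₂ j)
    (hopt : ∀ v₁ v₂ : ℕ → Bool, (∀ j ≤ K, v₁ j = v₂ j) →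
      planCost 0 (fun j => w₁ Nstar (t + j)) u₁ N +
          planCost 0 (fun j => w₂ Nstar (t + j)) u₂ N ≤
        planCost 0 (fun j => w₁ Nstar (t + j)) v₁ N +
          planCost 0 (fun j => w₂ Nstar (t + j)) v₂ N) :
    u₁ 0 = false := by
  by_contra hne
  have hu0 : u₁ 0 = true := by
    cases h : u₁ 0 with
    | false => exact absurd h hne
    | true => rfl
  set W₁ : ℕ → Bool := fun j => w₁ Nstar (t + j) with hW₁
  set W₂ : ℕ → Bool := fun j => w₂ Nstar (t + j) with hW₂
  have hle := hopt (fun _ => false) (fun _ => false) (fun _ _ => rfl)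
  have hRfin : planCost 0 W₁ (fun _ => false) N + planCost 0 W₂ (fun _ => false) N ≠ ⊤ :=
    ENNReal.add_ne_top.mpr ⟨planCost_false _ _, planCost_false _ _⟩
  have hfin : planCost 0 W₁ u₁ N + planCost 0 W₂ u₂ N ≠ ⊤ :=
    fun h => hRfin (top_le_iff.mp (h ▸ hle))
  obtain ⟨hfin1, hfin2⟩ := ENNReal.add_ne_top.mp hfin
  -- no trajectory hits 2 within the horizon
  have hno1 : ∀ j ≤ N, trajFrom 0 u₁ W₁ j ≠ 2 :=
    fun j hj h => hfin1 (planCost_eq_top 0 W₁ u₁ N j hj h)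
  have hno2 : ∀ j ≤ N, trajFrom 0 u₂ W₂ j ≠ 2 :=
    fun j hj h => hfin2 (planCost_eq_top 0 W₂ u₂ N j hj h)
  -- after the first step both trajectories are at state 1
  have hu₂0 : u₂ 0 = true := (hcons 0 (Nat.zero_le K)) ▸ hu0
  have hd1 : pmpcDyn 0 (u₁ 0) (W₁ 0) = 1 := by simp [pmpcDyn, hu0]
  have hd2 : pmpcDyn 0 (u₂ 0) (W₂ 0) = 1 := by simp [pmpcDyn, hu₂0]
  set j₀ : ℕ := max (Nstar - t) 1 with hj₀def
  have hj₀1 : 1 ≤ j₀ := le_max_right _ _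
  have hj₀K : j₀ ≤ K := by omega
  have hj₀N : j₀ ≤ N := by omega
  have hagree1 : ∀ i < j₀, u₁ (i + 1) = W₁ (i + 1) := by
    refine no_two _ _ j₀ (fun j hj h => ?_)
    have := traj_shift 0 u₁ W₁ j
    rw [hd1] at this
    exact hno1 (j + 1) (by omega) (this ▸ h)
  have hagree2 : ∀ i < j₀, u₂ (i + 1) = W₂ (i + 1) := by
    refine no_two _ _ j₀ (fun j hj h => ?_)
    have := traj_shift 0 u₂ W₂ j
    rw [hd2] at this
    exact hno2 (j + 1) (by omega) (this ▸ h)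
  have h1 := hagree1 (j₀ - 1) (by omega)
  have h2 := hagree2 (j₀ - 1) (by omega)
  have hj₀eq : j₀ - 1 + 1 = j₀ := by omega
  rw [hj₀eq] at h1 h2
  have hcj := hcons j₀ hj₀K
  have hwne : w₁ Nstar (t + j₀) ≠ w₂ Nstar (t + j₀) := w_ne Nstar (t + j₀) (by omega)
  rw [h1, h2] at hcj
  exact hwne hcj

theorem stmt13 (Nstar K N : ℕ) (hNstar : 2 ≤ Nstar) (hKN : K < N) :
    -- (a) with consensus horizon K ≥ N* (measured from the current time), any
    -- receding-horizon execution of K-consensus-optimal plans stays at state 0 forever,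
    -- under either true disturbance w₁ or w₂
    (Nstar ≤ K →
      ∀ π : ℕ → ℕ → Bool,
        (∀ t x : ℕ, ∃ u₁ u₂ : ℕ → Bool,
          (∀ j ≤ K, u₁ j = u₂ j) ∧
          (∀ v₁ v₂ : ℕ → Bool, (∀ j ≤ K, v₁ j = v₂ j) →
            planCost x (fun j => w₁ Nstar (t + j)) u₁ N +
                planCost x (fun j => w₂ Nstar (t + j)) u₂ N ≤
              planCost x (fun j => w₁ Nstar (t + j)) v₁ N +
                planCost x (fun j => w₂ Nstar (t + j)) v₂ N) ∧
          π t x = u₁ 0) →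
        ∀ t : ℕ, closedLoop π (w₁ Nstar) t = 0 ∧ closedLoop π (w₂ Nstar) t = 0) ∧
    -- (b) with consensus horizon K < N*, there is a plan, optimal for each particle
    -- individually, whose first action is 1; and executing a first action of 1 drives
    -- the closed-loop state to 2 under at least one of the two true disturbances
    (K < Nstar →
      (∃ u₁ u₂ : ℕ → Bool,
        (∀ j ≤ K, u₁ j = u₂ j) ∧ u₁ 0 = true ∧
        (∀ v : ℕ → Bool, planCost 0 (w₁ Nstar) u₁ N ≤ planCost 0 (w₁ Nstar) v N) ∧
        (∀ v : ℕ → Bool, planCost 0 (w₂ Nstar) u₂ N ≤ planCost 0 (w₂ Nstar) v N)) ∧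
      (∀ u : ℕ → Bool, u 0 = true →
        (∃ j, trajFrom 0 u (w₁ Nstar) j = 2) ∨ (∃ j, trajFrom 0 u (w₂ Nstar) j = 2))) := by
  constructor
  · -- part (a)
    intro hK π hπ
    intro t
    induction t with
    | zero => exact ⟨rfl, rfl⟩
    | succ t ih =>
      obtain ⟨ih1, ih2⟩ := ih
      obtain ⟨u₁, u₂, hcons, hopt, hπ0⟩ := hπ t 0
      have hfalse : π t 0 = false :=
        hπ0.trans (first_false Nstar K N t hNstar hKN hK u₁ u₂ hcons hopt)
      constructor
      · show pmpcDyn (closedLoop π (w₁ Nstar) t) _ _ = 0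
        rw [ih1, hfalse]
        simp [pmpcDyn]
      · show pmpcDyn (closedLoop π (w₂ Nstar) t) _ _ = 0
        rw [ih2, hfalse]
        simp [pmpcDyn]
  · -- part (b)
    intro hKlt
    constructor
    · refine ⟨fun j => if j = 0 then true else w₁ Nstar j,
        fun j => if j = 0 then true else w₂ Nstar j, ?_, by simp, ?_, ?_⟩
      · intro j hj
        by_cases h0 : j = 0
        · simp [h0]
        · have hjN : j < Nstar := by omega
          simp [h0, w₁, w₂, hjN]
      · intro v
        rw [track_cost]
        exact one_le_planCost _ _ _
      · intro v
        rw [track_cost]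
        exact one_le_planCost _ _ _
    · intro u hu0
      by_contra hcon
      push_neg at hcon
      obtain ⟨hc1, hc2⟩ := hcon
      have hd : pmpcDyn 0 (u 0) (w₁ Nstar 0) = 1 := by simp [pmpcDyn, hu0]
      have hd2 : pmpcDyn 0 (u 0) (w₂ Nstar 0) = 1 := by simp [pmpcDyn, hu0]
      have hagree1 : ∀ i < Nstar, u (i + 1) = w₁ Nstar (i + 1) := by
        refine no_two _ _ Nstar (fun j _ h => ?_)
        have := traj_shift 0 u (w₁ Nstar) j
        rw [hd] at this
        exact hc1 (j + 1) (this ▸ h)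
      have hagree2 : ∀ i < Nstar, u (i + 1) = w₂ Nstar (i + 1) := by
        refine no_two _ _ Nstar (fun j _ h => ?_)
        have := traj_shift 0 u (w₂ Nstar) j
        rw [hd2] at this
        exact hc2 (j + 1) (this ▸ h)
      have h1 := hagree1 (Nstar - 1) (by omega)
      have h2 := hagree2 (Nstar - 1) (by omega)
      have heq : Nstar - 1 + 1 = Nstar := by omega
      rw [heq] at h1 h2
      exact w_ne Nstar Nstar le_rfl (h1 ▸ h2)
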